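/- Every Hamiltonian graph with an odd number of vertices is a Sterboul–Deming graph; that is, every vertex belongs to a flower or posy relative to some maximum matching. -/

import Mathlib

open SimpleGraph

variable {V : Type*} [DecidableEq V]

/-- `M` is a matching of `G`: a set of edges of `G`, pairwise not sharing a vertex. -/
def IsMatching' (G : SimpleGraph V) (M : Finset (Sym2 V)) : Prop :=
  (↑M : Set (Sym2 V)) ⊆ G.edgeSet ∧
    ∀ e ∈ M, ∀ f ∈ M, e ≠ f → ∀ v : V, ¬(v ∈ e ∧ v ∈ f)

/-- `M` is a maximum matching of `G`. -/
def IsMaxMatching (G : SimpleGraph V) (M : Finset (Sym2 V)) : Prop :=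
  IsMatching' G M ∧ ∀ M' : Finset (Sym2 V), IsMatching' G M' → M'.card ≤ M.card

/-- The vertex `v` is matched (saturated) by `M`. -/
def MatchedBy (M : Finset (Sym2 V)) (v : V) : Prop :=
  ∃ e ∈ M, v ∈ e

/-- A walk is `M`-alternating: consecutive edges alternate between `M` and its complement. -/
def IsAltWalk {G : SimpleGraph V} (M : Finset (Sym2 V)) {u v : V} (w : G.Walk u v) : Prop :=
  w.edges.Chain' (fun e f => e ∈ M ↔ f ∉ M)

/-- The first edge of the walk belongs to `M`. -/
def StartsMatched {G : SimpleGraph V} (M : Finset (Sym2 V)) {u v : V} (w : G.Walk u v) : Prop :=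
  ∃ e, w.edges.head? = some e ∧ e ∈ M

/-- The last edge of the walk belongs to `M`. -/
def EndsMatched {G : SimpleGraph V} (M : Finset (Sym2 V)) {u v : V} (w : G.Walk u v) : Prop :=
  ∃ e, w.edges.getLast? = some e ∧ e ∈ M

/-- The first edge of the walk does not belong to `M`. -/
def StartsUnmatched {G : SimpleGraph V} (M : Finset (Sym2 V)) {u v : V} (w : G.Walk u v) : Prop :=
  ∃ e, w.edges.head? = some e ∧ e ∉ M

/-- The last edge of the walk does not belong to `M`. -/
def EndsUnmatched {G : SimpleGraph V} (M : Finset (Sym2 V)) {u v : V} (w : G.Walk u v) : Prop :=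
  ∃ e, w.edges.getLast? = some e ∧ e ∉ M

/-- An `M`-blossom with base `b`: an odd cycle of length `2k+1` containing exactly `k`
edges of `M`, alternating, whose base `b` is not matched within the cycle. -/
def IsBlossom (G : SimpleGraph V) (M : Finset (Sym2 V)) {b : V} (c : G.Walk b b) : Prop :=
  c.IsCycle ∧ Odd c.length ∧ IsAltWalk M c ∧
    2 * (c.edges.toFinset ∩ M).card + 1 = c.length ∧
    ∀ e ∈ c.edges, e ∈ M → b ∉ e

/-- An `M`-flower: an `M`-blossom with base `b` together with an even `M`-alternating
stem from `b` to an `M`-unmatched vertex `u`, sharing only the base with the blossom. -/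
def IsFlower (G : SimpleGraph V) (M : Finset (Sym2 V)) {b u : V}
    (c : G.Walk b b) (s : G.Walk b u) : Prop :=
  IsBlossom G M c ∧ s.IsPath ∧ Even s.length ∧ IsAltWalk M s ∧
    ¬ MatchedBy M u ∧ ∀ x ∈ s.support, x ∈ c.support → x = b

/-- An `M`-posy: two distinct `M`-blossoms joined by an odd `M`-alternating path
between their bases, starting and ending with matched edges. -/
def IsPosy (G : SimpleGraph V) (M : Finset (Sym2 V)) {b₁ b₂ : V}
    (c₁ : G.Walk b₁ b₁) (c₂ : G.Walk b₂ b₂) (p : G.Walk b₁ b₂) : Prop :=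
  IsBlossom G M c₁ ∧ IsBlossom G M c₂ ∧ (b₁ ≠ b₂ ∨ c₁.edges ≠ c₂.edges) ∧
    p.IsPath ∧ Odd p.length ∧ IsAltWalk M p ∧ StartsMatched M p ∧ EndsMatched M p

/-- An `M`-Tposy: a posy whose connecting path is internally disjoint from both blossoms. -/
def IsTposy (G : SimpleGraph V) (M : Finset (Sym2 V)) {b₁ b₂ : V}
    (c₁ : G.Walk b₁ b₁) (c₂ : G.Walk b₂ b₂) (p : G.Walk b₁ b₂) : Prop :=
  IsPosy G M c₁ c₂ p ∧
    ∀ x ∈ p.support, x ≠ b₁ → x ≠ b₂ → x ∉ c₁.support ∧ x ∉ c₂.support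

/-- An `M`-Jposy: two (not necessarily distinct) `M`-blossoms joined by an odd
`M`-alternating walk between their bases, starting and ending with matched edges. -/
def IsJposy (G : SimpleGraph V) (M : Finset (Sym2 V)) {b₁ b₂ : V}
    (c₁ : G.Walk b₁ b₁) (c₂ : G.Walk b₂ b₂) (w : G.Walk b₁ b₂) : Prop :=
  IsBlossom G M c₁ ∧ IsBlossom G M c₂ ∧
    Odd w.length ∧ IsAltWalk M w ∧ StartsMatched M w ∧ EndsMatched M w

/-- An `M`-Jflower: an `M`-blossom together with an `M`-alternating walk from its base
to an `M`-unmatched vertex. -/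
def IsJflower (G : SimpleGraph V) (M : Finset (Sym2 V)) {b u : V}
    (c : G.Walk b b) (w : G.Walk b u) : Prop :=
  IsBlossom G M c ∧ IsAltWalk M w ∧ ¬ MatchedBy M u

/-- The vertex `x` belongs to some `M`-flower. -/
def InFlower (G : SimpleGraph V) (M : Finset (Sym2 V)) (x : V) : Prop :=
  ∃ (b u : V) (c : G.Walk b b) (s : G.Walk b u),
    IsFlower G M c s ∧ (x ∈ c.support ∨ x ∈ s.support)

/-- The vertex `x` belongs to some `M`-posy. -/
def InPosy (G : SimpleGraph V) (M : Finset (Sym2 V)) (x : V) : Prop :=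
  ∃ (b₁ b₂ : V) (c₁ : G.Walk b₁ b₁) (c₂ : G.Walk b₂ b₂) (p : G.Walk b₁ b₂),
    IsPosy G M c₁ c₂ p ∧ (x ∈ c₁.support ∨ x ∈ c₂.support ∨ x ∈ p.support)

/-- The vertex `x` belongs to some `M`-Tposy. -/
def InTposy (G : SimpleGraph V) (M : Finset (Sym2 V)) (x : V) : Prop :=
  ∃ (b₁ b₂ : V) (c₁ : G.Walk b₁ b₁) (c₂ : G.Walk b₂ b₂) (p : G.Walk b₁ b₂),
    IsTposy G M c₁ c₂ p ∧ (x ∈ c₁.support ∨ x ∈ c₂.support ∨ x ∈ p.support)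

/-- The vertex `x` belongs to some `M`-Jposy. -/
def InJposy (G : SimpleGraph V) (M : Finset (Sym2 V)) (x : V) : Prop :=
  ∃ (b₁ b₂ : V) (c₁ : G.Walk b₁ b₁) (c₂ : G.Walk b₂ b₂) (w : G.Walk b₁ b₂),
    IsJposy G M c₁ c₂ w ∧ (x ∈ c₁.support ∨ x ∈ c₂.support ∨ x ∈ w.support)

/-- The vertex `x` belongs to some `M`-Jflower. -/
def InJflower (G : SimpleGraph V) (M : Finset (Sym2 V)) (x : V) : Prop :=
  ∃ (b u : V) (c : G.Walk b b) (w : G.Walk b u),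
    IsJflower G M c w ∧ (x ∈ c.support ∨ x ∈ w.support)

/-- The independence number of `G`. -/
noncomputable def indepNum' (G : SimpleGraph V) : ℕ :=
  sSup {n | ∃ s : Finset V, (∀ u ∈ s, ∀ w ∈ s, ¬ G.Adj u w) ∧ s.card = n}

/-- The matching number of `G`. -/
noncomputable def matchNum (G : SimpleGraph V) : ℕ :=
  sSup {n | ∃ M : Finset (Sym2 V), IsMatching' G M ∧ M.card = n}

/-- `G` is a König–Egerváry graph: `α(G) + μ(G) = |V(G)|`. -/
def IsKE (G : SimpleGraph V) [Fintype V] : Prop :=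
  indepNum' G + matchNum G = Fintype.card V

section Aux

variable {α : Type*}

/-- Pair up consecutive elements of a list. -/
def pairsL : List α → List (Sym2 α)
  | a :: b :: t => s(a, b) :: pairsL t
  | _ => []

@[simp] lemma pairsL_nil : pairsL ([] : List α) = [] := rfl
@[simp] lemma pairsL_single (a : α) : pairsL [a] = [] := rfl
@[simp] lemma pairsL_cons_cons (a b : α) (t : List α) :
    pairsL (a :: b :: t) = s(a, b) :: pairsL t := rfl

lemma pairsL_length : ∀ l : List α, (pairsL l).length = l.length / 2
  | [] => by simp
  | [_] => by simp
  | a :: b :: t => by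
    simp only [pairsL_cons_cons, List.length_cons, pairsL_length t]
    omega

lemma mem_of_mem_pairsL : ∀ {l : List α} {e : Sym2 α} {x : α},
    e ∈ pairsL l → x ∈ e → x ∈ l
  | a :: b :: t, e, x, he, hx => by
    rcases List.mem_cons.1 he with rfl | he
    · rcases Sym2.mem_iff.1 hx with rfl | rfl <;> simp
    · have := mem_of_mem_pairsL he hx
      simp [this]

lemma mem_dropLast_of_mem_pairsL : ∀ {l : List α} {e : Sym2 α} {x : α},
    Odd l.length → e ∈ pairsL l → x ∈ e → x ∈ l.dropLast
  | a :: b :: t, e, x, hodd, he, hx => by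
    obtain ⟨m, hm⟩ := hodd
    have ht : t ≠ [] := by
      rintro rfl; simp at hm
    obtain ⟨c', t', rfl⟩ : ∃ c' t', t = c' :: t' := by
      cases t with
      | nil => exact absurd rfl ht
      | cons c' t' => exact ⟨c', t', rfl⟩
    rcases List.mem_cons.1 he with rfl | he
    · rcases Sym2.mem_iff.1 hx with rfl | rfl <;> simp
    · have hodd' : Odd (c' :: t').length := by
        simp at hm ⊢
        exact ⟨m - 1, by omega⟩
      have := mem_dropLast_of_mem_pairsL hodd' he hx
      simp at this ⊢
      tauto

lemma pairsL_nodup : ∀ {l : List α}, l.Nodup → (pairsL l).Nodup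
  | [], _ => List.nodup_nil
  | [_], _ => List.nodup_nil
  | a :: b :: t, h => by
    have ha : a ∉ t := by simp [List.nodup_cons] at h; tauto
    have ht : t.Nodup := by simp [List.nodup_cons] at h; tauto
    refine List.nodup_cons.2 ⟨fun hmem => ?_, pairsL_nodup ht⟩
    exact ha (mem_of_mem_pairsL hmem (by simp))

lemma pairsL_disjoint : ∀ {l : List α}, l.Nodup →
    ∀ e ∈ pairsL l, ∀ f ∈ pairsL l, e ≠ f → ∀ x : α, ¬(x ∈ e ∧ x ∈ f)
  | a :: b :: t, h, e, he, f, hf, hef, x, ⟨hxe, hxf⟩ => by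
    have ha : a ∉ t := by simp [List.nodup_cons] at h; tauto
    have hb : b ∉ t := by simp [List.nodup_cons] at h; tauto
    have hab : a ≠ b := by simp [List.nodup_cons] at h; tauto
    have ht : t.Nodup := by simp [List.nodup_cons] at h; tauto
    rcases List.mem_cons.1 he with rfl | he <;> rcases List.mem_cons.1 hf with rfl | hf
    · exact hef rfl
    · have hxt : x ∈ t := mem_of_mem_pairsL hf hxf
      rcases Sym2.mem_iff.1 hxe with rfl | rfl
      · exact ha hxt
      · exact hb hxt
    · have hxt : x ∈ t := mem_of_mem_pairsL he hxe
      rcases Sym2.mem_iff.1 hxf with rfl | rfl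
      · exact ha hxt
      · exact hb hxt
    · exact pairsL_disjoint ht e he f hf hef x ⟨hxe, hxf⟩

/-- Elements of a list at odd positions. -/
def altOddL : List α → List α
  | _ :: b :: t => b :: altOddL t
  | _ => []

/-- Elements of a list at even positions. -/
def altEvenL : List α → List α
  | [] => []
  | a :: t => a :: altOddL t

@[simp] lemma altOddL_nil : altOddL ([] : List α) = [] := rfl
@[simp] lemma altOddL_single (a : α) : altOddL [a] = [] := rfl
@[simp] lemma altOddL_cons_cons (a b : α) (t : List α) :
    altOddL (a :: b :: t) = b :: altOddL t := rfl

lemma altOddL_cons (a : α) (l : List α) : altOddL (a :: l) = altEvenL l := by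
  cases l <;> rfl

lemma altOddL_sublist : ∀ l : List α, List.Sublist (altOddL l) l
  | [] => List.Sublist.refl _
  | [a] => by simp
  | a :: b :: t => by
    simpa using ((altOddL_sublist t).cons₂ b).cons a

lemma get_mem_altOddL : ∀ (l : List α), l.Nodup → ∀ (i : ℕ) (h : i < l.length),
    (l.get ⟨i, h⟩ ∈ altOddL l ↔ Odd i)
  | [], _, i, h => by simp at h
  | [a], _, i, h => by
    have : i = 0 := by simpa using h
    subst this
    simp [Nat.odd_iff]
  | a :: b :: t, hn, 0, h => by
    have ha : a ∉ t := by simp [List.nodup_cons] at hn; tauto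
    have hab : a ≠ b := by simp [List.nodup_cons] at hn; tauto
    simp only [List.get, altOddL_cons_cons, List.mem_cons]
    constructor
    · rintro (rfl | hmem)
      · exact absurd rfl hab
      · exact absurd ((altOddL_sublist t).subset hmem) ha
    · intro hodd; exact absurd hodd (by decide)
  | a :: b :: t, hn, 1, h => by simp
  | a :: b :: t, hn, j + 2, h => by
    have hb : b ∉ t := by simp [List.nodup_cons] at hn; tauto
    have ht : t.Nodup := by simp [List.nodup_cons] at hn; tauto
    have h' : j < t.length := by simpa using h
    have hget : (a :: b :: t).get ⟨j + 2, h⟩ = t.get ⟨j, h'⟩ := rfl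
    have hne : t.get ⟨j, h'⟩ ≠ b := fun hEq => hb (hEq ▸ t.get_mem ⟨j, h'⟩)
    rw [hget]
    simp only [altOddL_cons_cons, List.mem_cons, hne, false_or]
    rw [get_mem_altOddL t ht j h']
    constructor
    · rintro ⟨m, rfl⟩; exact ⟨m + 1, by ring⟩
    · rintro ⟨m, hm⟩; exact ⟨m - 1, by omega⟩

lemma walk_pairsL {W : Type*} {G : SimpleGraph W} :
    ∀ {u v : W} (w : G.Walk u v),
      pairsL w.support.tail = altOddL w.edges ∧
        pairsL w.support = altEvenL w.edges := by
  intro u v w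
  induction w with
  | nil => simp [altEvenL]
  | @cons u x v h q ih =>
    constructor
    · have h1 : (SimpleGraph.Walk.cons h q).support.tail = q.support := by simp
      rw [h1, ih.2, SimpleGraph.Walk.edges_cons, altOddL_cons]
    · have hs : (SimpleGraph.Walk.cons h q).support = u :: x :: q.support.tail := by
        rw [SimpleGraph.Walk.support_cons]
        conv_lhs => rw [q.support_eq_cons]
      rw [hs, SimpleGraph.Walk.edges_cons]
      simp only [pairsL_cons_cons, altEvenL]
      rw [ih.1]

lemma walk_pairsL_tail {W : Type*} {G : SimpleGraph W} {u v : W} (w : G.Walk u v) :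
    pairsL w.support.tail = altOddL w.edges := (walk_pairsL w).1

/-- The vertex set of an edge, as a finset. -/
def sym2Finset [DecidableEq α] (e : Sym2 α) : Finset α :=
  Sym2.lift ⟨fun a b => ({a, b} : Finset α), fun a b => by
    simp [Finset.pair_comm]⟩ e

@[simp] lemma mem_sym2Finset [DecidableEq α] (e : Sym2 α) (x : α) :
    x ∈ sym2Finset e ↔ x ∈ e := by
  induction e with
  | _ a b => simp [sym2Finset, Sym2.mem_iff]

lemma card_sym2Finset [DecidableEq α] (e : Sym2 α) (h : ¬ e.IsDiag) :
    (sym2Finset e).card = 2 := by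
  induction e with
  | _ a b =>
    have hab : a ≠ b := by simpa using h
    simp [sym2Finset, Finset.card_insert_of_notMem, hab]

lemma matching_two_mul_card_le {W : Type*} [DecidableEq W] [Fintype W]
    (G : SimpleGraph W) (M : Finset (Sym2 W)) (h : IsMatching' G M) :
    2 * M.card ≤ Fintype.card W := by
  have hdisj : ∀ e ∈ M, ∀ f ∈ M, e ≠ f → Disjoint (sym2Finset e) (sym2Finset f) := by
    intro e he f hf hef
    rw [Finset.disjoint_left]
    intro x hxe hxf
    exact h.2 e he f hf hef x ⟨(mem_sym2Finset e x).1 hxe, (mem_sym2Finset f x).1 hxf⟩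
  have hcard : (M.biUnion sym2Finset).card = ∑ e ∈ M, (sym2Finset e).card :=
    Finset.card_biUnion hdisj
  have h2 : ∀ e ∈ M, (sym2Finset e).card = 2 := by
    intro e he
    exact card_sym2Finset e (G.not_isDiag_of_mem_edgeSet (h.1 he))
  rw [Finset.sum_congr rfl h2, Finset.sum_const, smul_eq_mul, mul_comm] at hcard
  calc 2 * M.card = (M.biUnion sym2Finset).card := hcard.symm
    _ ≤ Fintype.card W := Finset.card_le_univ _

end Aux

/-- Every Hamiltonian graph with an odd number of vertices is a
Sterboul–Deming graph: every vertex lies in a flower or posy relative to some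
maximum matching. -/
theorem stmt_14 {V : Type*} [DecidableEq V] [Fintype V] (G : SimpleGraph V)
    (hodd : Odd (Fintype.card V))
    (hham : ∃ (v : V) (c : G.Walk v v), c.IsHamiltonianCycle) :
    ∀ x : V, ∃ M : Finset (Sym2 V), IsMaxMatching G M ∧
      (InFlower G M x ∨ InPosy G M x) := by
  intro x
  obtain ⟨v, c, hc⟩ := hham
  obtain ⟨k, hk⟩ := hodd
  set T : List V := c.support.tail with hT
  have hTnodup : T.Nodup := hc.isCycle.support_nodup
  have hTlen : T.length = Fintype.card V := by
    have h1 : c.support.length = c.length + 1 := c.length_support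
    have h2 : T.length = c.length := by
      rw [hT, List.length_tail, h1]
      omega
    rw [h2, hc.length_eq]
  set M : Finset (Sym2 V) := (pairsL T).toFinset with hM
  have hPA : pairsL T = altOddL c.edges := walk_pairsL_tail c
  have hmemM : ∀ e : Sym2 V, e ∈ M ↔ e ∈ altOddL c.edges := by
    intro e; rw [hM, List.mem_toFinset, hPA]
  have hEnodup : c.edges.Nodup := hc.isCycle.edges_nodup
  have hmatch : IsMatching' G M := by
    constructor
    · intro e he
      exact c.edges_subset_edgeSet ((altOddL_sublist _).subset ((hmemM e).1 he))
    · intro e he f hf hef y hy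
      exact pairsL_disjoint hTnodup e (List.mem_toFinset.1 he) f
        (List.mem_toFinset.1 hf) hef y hy
  have hMcard : M.card = k := by
    rw [hM, List.toFinset_card_of_nodup (pairsL_nodup hTnodup), pairsL_length, hTlen, hk]
    omega
  have hmax : IsMaxMatching G M := by
    refine ⟨hmatch, fun M' hM' => ?_⟩
    have := matching_two_mul_card_le G M' hM'
    rw [hMcard]; omega
  have hTne : T ≠ [] := by
    intro h; rw [h] at hTlen; simp at hTlen; omega
  have hTlast : T.getLast hTne = v := by
    have h4 := List.getLast_tail (l := c.support) hTne
    rw [c.getLast_support] at h4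
    exact h4
  have hvnot : ∀ e ∈ M, v ∉ e := by
    intro e he hv
    have hodd' : Odd T.length := by rw [hTlen, hk]; exact ⟨k, rfl⟩
    have hvd : v ∈ T.dropLast :=
      mem_dropLast_of_mem_pairsL hodd' (List.mem_toFinset.1 he) hv
    have hsplit : T.dropLast ++ [T.getLast hTne] = T := List.dropLast_append_getLast hTne
    have hnd : (T.dropLast ++ [T.getLast hTne]).Nodup := by rw [hsplit]; exact hTnodup
    have hdisj := (List.nodup_append.1 hnd).2.2
    exact hdisj v hvd v (by simp [hTlast]) rfl
  have hchar : ∀ (i : ℕ) (h : i < c.edges.length), (c.edges.get ⟨i, h⟩ ∈ M ↔ Odd i) :=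
    fun i h => (hmemM _).trans (get_mem_altOddL _ hEnodup i h)
  have hblossom : IsBlossom G M c := by
    refine ⟨hc.isCycle, ?_, ?_, ?_, ?_⟩
    · rw [hc.length_eq, hk]; exact ⟨k, rfl⟩
    · rw [IsAltWalk, List.Chain', List.isChain_iff_getElem]
      intro i h
      have h1 := hchar i (by omega); have h2 := hchar (i + 1) h
      simp only [List.get_eq_getElem] at h1 h2; rw [h1, h2]
      simp [Nat.odd_add_one, Nat.not_even_iff_odd]
    · have hsub : M ⊆ c.edges.toFinset := fun e he =>
        List.mem_toFinset.2 ((altOddL_sublist _).subset ((hmemM e).1 he))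
      rw [Finset.inter_eq_right.2 hsub, hMcard, hc.length_eq, hk]
    · intro e _ heM
      exact hvnot e heM
  have hflower : IsFlower G M c (SimpleGraph.Walk.nil) := by
    refine ⟨hblossom, SimpleGraph.Walk.IsPath.nil, by simp, by simp [IsAltWalk, List.Chain'], ?_, ?_⟩
    · rintro ⟨e, he, hv⟩; exact hvnot e he hv
    · intro y hy _; simpa using hy
  exact ⟨M, hmax, Or.inl ⟨v, v, c, SimpleGraph.Walk.nil, hflower,
    Or.inl (hc.mem_support x)⟩⟩
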